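/- Convergence theorem for two-step Runge–Kutta (TSRK) methods applied to retarded functional differential equations: Let r ≥ 0, d ≥ 1, let C := C([−r,0], ℝ^d) with the supremum norm, and for a continuous function u and time t write u_t ∈ C for the shift u_t(θ) = u(t+θ). Let f : ℝ × C → ℝ^d be continuous and Lipschitz in its second argument with constant L, uniformly in the first argument. Let t₀ < T and let y : [t₀−r−1, T] → ℝ^d be continuous and satisfy y′(t) = f(t, y_t) for all t ∈ [t₀, T]. Fix an integer s ≥ 1, abscissae c_1,…,c_s ∈ [0,1] with c_{s+1} := 1, and polynomial coefficient functions u_i, ã_{ij}, a_{ij} : ℝ → ℝ (i = 1,…,s+1, j = 1,…,s) with u_i(0) = 1 and ã_{ij}(0) = a_{ij}(0) = 0. Assume zero-stability: there is C_M ≥ 1 such that ‖M^l‖ ≤ C_M for all l ≥ 1, where M is the (s+2)×(s+2) matrix with entries M_{i,s+1} = u_i(c_i) and M_{i,s+2} = 1−u_i(c_i) for i = 1,…,s+1, M_{s+2,s+1} = 1, and all other entries 0, acting blockwise on (ℝ^d)^{s+2} equipped with the maximum-of-blocks norm. Fix an integer p ≥ 1 and C₁ > 0. Then there exist h̄ ∈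 (0,1] and C > 0 with the following property. Let N ∈ ℕ with h := (T−t₀)/N ≤ h̄ and t_n := t₀+nh; for n = 0,…,N let Z^{[n]} : [−r,0] → (ℝ^d)^{s+2} be the exact value function with blocks Z^{[n],i} = y_{t_n+(c_i−1)h} for i = 1,…,s+1 and Z^{[n],s+2} ≡ y(t_{n−1}); let z^{[0]},…,z^{[N]} : [−r,0] → (ℝ^d)^{s+2} be continuous functions whose (s+2)-th block is constant which satisfy the TSRK recursion for n = 1,…,N: (i) z^{[n],i}(ω) = (1−u_i(ω/h+c_i))·z^{[n−1],s+2} + u_i(ω/h+c_i)·z^{[n−1],s+1}(0) + h·Σ_{j=1}^{s} ã_{ij}(ω/h+c_i)·f(t_{n−2}+c_j h, z^{[n−1],j}) + h·Σ_{j=1}^{s} a_{ij}(ω/h+c_i)·f(t_{n−1}+c_j h, z^{[n],j}) for ω ∈ [−c_i h, 0], i = 1,…,s+1; (ii) z^{[n],i}(ω) = z^{[n−1],s+1}(ω+c_i h) for ω ∈ [−r, −c_i h], i = 1,…,s+1; (iii) z^{[n],s+2} = z^{[n−1],s+1}(0). Define the global errors q^{[n]} := Z^{[n]} − z^{[n]},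 and define the local residuals d^{[n]} : [−r,0] → (ℝ^d)^{s+2} by h·d^{[n],i}(ω) := Z^{[n],i}(ω) − (1−u_i(ω/h+c_i))·Z^{[n−1],s+2} − u_i(ω/h+c_i)·Z^{[n−1],s+1}(0) − h·Σ_{j=1}^{s} ã_{ij}(ω/h+c_i)·f(t_{n−2}+c_j h, Z^{[n−1],j}) − h·Σ_{j=1}^{s} a_{ij}(ω/h+c_i)·f(t_{n−1}+c_j h, Z^{[n],j}) for ω ∈ [−c_i h, 0], d^{[n],i}(ω) := 0 for ω ∈ [−r, −c_i h), and d^{[n],s+2} := 0. If ‖q^{[0]}‖ ≤ C₁·h^p, max_{1≤n≤N} ‖d^{[n]}‖ ≤ C₁·h^{p−1}, and max_{1≤n≤N−1} ‖d^{[n]}(0)‖ ≤ C₁·h^p (where ‖·‖ on functions is the supremum over [−r,0] of the maximum-of-blocks norm), then max_{0≤n≤N} ‖q^{[n]}‖ ≤ C·h^p, i.e. the method converges with uniform order p. -/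

import Mathlib

private lemma tsrk_poly_bound {ι : Type*} [Fintype ι] (v : ι → ℝ → ℝ)
    (hv : ∀ i, ∃ P : Polynomial ℝ, ∀ x, v i x = P.eval x) :
    ∃ B : ℝ, 0 ≤ B ∧ ∀ i, ∀ x ∈ Set.Icc (0:ℝ) 1, |v i x| ≤ B := by
  have hb : ∀ i, ∃ Bi : ℝ, ∀ x ∈ Set.Icc (0:ℝ) 1, |v i x| ≤ Bi := by
    intro i
    obtain ⟨P, hP⟩ := hv i
    obtain ⟨Bi, hBi⟩ := (isCompact_Icc (a := (0:ℝ)) (b := 1)).exists_bound_of_continuousOn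
      P.continuous.continuousOn
    exact ⟨Bi, fun x hx => by rw [hP x, ← Real.norm_eq_abs]; exact hBi x hx⟩
  choose Bi hBi using hb
  refine ⟨∑ i, max (Bi i) 0, Finset.sum_nonneg fun i _ => le_max_right _ _, fun i x hx => ?_⟩
  calc |v i x| ≤ max (Bi i) 0 := le_trans (hBi i x hx) (le_max_left _ _)
    _ ≤ ∑ i, max (Bi i) 0 :=
        Finset.single_le_sum (f := fun i => max (Bi i) 0)
          (fun j _ => le_max_right _ _) (Finset.mem_univ i)

private lemma tsrk_gronwall (A B : ℝ) (hB : 0 ≤ B) (a : ℕ → ℝ) (N : ℕ)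
    (H : ∀ n ≤ N, a n ≤ A + B * ∑ k ∈ Finset.range n, a k) :
    ∀ n ≤ N, a n ≤ A * (1 + B) ^ n := by
  intro n hn
  induction n using Nat.strong_induction_on with
  | _ n ih =>
    have hg : (∑ k ∈ Finset.range n, (1 + B) ^ k) * B = (1 + B) ^ n - 1 := by
      have := geom_sum_mul (1 + B) n
      simpa using this
    calc a n ≤ A + B * ∑ k ∈ Finset.range n, a k := H n hn
      _ ≤ A + B * ∑ k ∈ Finset.range n, A * (1 + B) ^ k := by
          gcongr with k hk
          exact ih k (Finset.mem_range.mp hk) (le_trans (Nat.le_of_lt (Finset.mem_range.mp hk)) hn)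
      _ = A * (1 + B) ^ n := by
          rw [Finset.mul_sum]
          rw [show ∑ k ∈ Finset.range n, B * (A * (1+B)^k)
              = A * ((∑ k ∈ Finset.range n, (1+B)^k) * B) by
            rw [Finset.sum_mul, Finset.mul_sum]; exact Finset.sum_congr rfl fun k _ => by ring]
          rw [hg]; ring



set_option maxHeartbeats 8000000 in
/-- Convergence theorem for two-step Runge–Kutta methods applied to retarded functional
differential equations `y′(t) = f(t, y_t)` (Theorem 1): if the method is zero-stable,
the starting error is `O(h^p)`, the uniform order of consistency is `p − 1` and the
discrete order of consistency is `p`, then the uniform order of convergence is `p`.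
Blocks of the method live in `C([−r,0], ℝ^d)`; block `i ≤ s+1` of the exact value
function `Z^{[n]}` is the shift `y_{t_n+(c_i−1)h}` and block `s+2` is constantly
`y(t_{n−1})`. -/
theorem tsrk_convergence
    (r : ℝ) (hr : 0 ≤ r) (d : ℕ) (hd : 1 ≤ d) (L : ℝ)
    (f : ℝ → C(Set.Icc (-r) (0 : ℝ), EuclideanSpace ℝ (Fin d)) → EuclideanSpace ℝ (Fin d))
    (hf_cont : Continuous fun q : ℝ × C(Set.Icc (-r) (0 : ℝ), EuclideanSpace ℝ (Fin d)) =>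
      f q.1 q.2)
    (hf_lip : ∀ t φ ψ, ‖f t φ - f t ψ‖ ≤ L * ‖φ - ψ‖)
    (t₀ T : ℝ) (hT : t₀ < T)
    (y : ℝ → EuclideanSpace ℝ (Fin d)) (hy : Continuous y)
    (hode : ∀ t ∈ Set.Icc t₀ T,
      HasDerivWithinAt y
        (f t ⟨fun θ => y (t + (θ : ℝ)), hy.comp (continuous_const.add continuous_subtype_val)⟩)
        (Set.Icc t₀ T) t)
    (s : ℕ) (hs : 1 ≤ s)
    (c : Fin (s + 1) → ℝ) (hc : ∀ i, c i ∈ Set.Icc (0 : ℝ) 1) (hcl : c (Fin.last s) = 1)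
    (u : Fin (s + 1) → ℝ → ℝ) (atil a : Fin (s + 1) → Fin s → ℝ → ℝ)
    (hupoly : ∀ i, ∃ P : Polynomial ℝ, ∀ x, u i x = P.eval x)
    (hatilpoly : ∀ i j, ∃ P : Polynomial ℝ, ∀ x, atil i j x = P.eval x)
    (hapoly : ∀ i j, ∃ P : Polynomial ℝ, ∀ x, a i j x = P.eval x)
    (hu0 : ∀ i, u i 0 = 1)
    (hatil0 : ∀ i j, atil i j 0 = 0) (ha0 : ∀ i j, a i j 0 = 0)
    (M : Matrix (Fin (s + 2)) (Fin (s + 2)) ℝ)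
    (hM : ∀ i j, M i j =
      if hi : (i : ℕ) < s + 1 then
        (if (j : ℕ) = s then u ⟨(i : ℕ), hi⟩ (c ⟨(i : ℕ), hi⟩)
         else if (j : ℕ) = s + 1 then 1 - u ⟨(i : ℕ), hi⟩ (c ⟨(i : ℕ), hi⟩) else 0)
      else (if (j : ℕ) = s then 1 else 0))
    (CM : ℝ) (hCM : 1 ≤ CM)
    (hMpow : ∀ l : ℕ, 1 ≤ l → ∀ x : Fin (s + 2) → EuclideanSpace ℝ (Fin d),
      ‖(fun i => ∑ j, (M ^ l) i j • x j : Fin (s + 2) → EuclideanSpace ℝ (Fin d))‖ ≤ CM * ‖x‖)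
    (p : ℕ) (hp : 1 ≤ p) (C₁ : ℝ) (hC₁ : 0 < C₁) :
    ∃ hbar ∈ Set.Ioc (0 : ℝ) 1, ∃ C > 0,
      ∀ (N : ℕ) (hN : 0 < N) (h : ℝ) (hheq : h = (T - t₀) / N), h ≤ hbar →
      ∀ Z z dd : ℕ → Fin (s + 2) → C(Set.Icc (-r) (0 : ℝ), EuclideanSpace ℝ (Fin d)),
        -- exact value function: blocks 1,…,s+1 are shifts of the exact solution
        (∀ n ≤ N, ∀ (i : Fin (s + 1)) (θ : Set.Icc (-r) (0 : ℝ)),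
          Z n i.castSucc θ = y (t₀ + (n : ℝ) * h + (c i - 1) * h + (θ : ℝ))) →
        -- exact value function: block s+2 is constantly y(t_{n−1})
        (∀ n ≤ N, ∀ θ : Set.Icc (-r) (0 : ℝ),
          Z n (Fin.last (s + 1)) θ = y (t₀ + ((n : ℝ) - 1) * h)) →
        -- the (s+2)-th block of the numerical solution is constant
        (∀ n ≤ N, ∀ θ θ' : Set.Icc (-r) (0 : ℝ),
          z n (Fin.last (s + 1)) θ = z n (Fin.last (s + 1)) θ') →
        -- TSRK recursion (i): on [−c_i h, 0]
        (∀ n, 1 ≤ n → n ≤ N → ∀ i : Fin (s + 1), ∀ ω : Set.Icc (-r) (0 : ℝ),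
          -(c i * h) ≤ (ω : ℝ) →
            z n i.castSucc ω =
              (1 - u i ((ω : ℝ) / h + c i)) •
                  z (n - 1) (Fin.last (s + 1)) ⟨0, Set.right_mem_Icc.mpr (by linarith)⟩
                + u i ((ω : ℝ) / h + c i) •
                  z (n - 1) ((Fin.last s).castSucc) ⟨0, Set.right_mem_Icc.mpr (by linarith)⟩
                + h • ∑ j : Fin s, atil i j ((ω : ℝ) / h + c i) •
                    f (t₀ + ((n : ℝ) - 2 + c j.castSucc) * h) (z (n - 1) j.castSucc.castSucc)
                + h • ∑ j : Fin s, a i j ((ω : ℝ) / h + c i) •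
                    f (t₀ + ((n : ℝ) - 1 + c j.castSucc) * h) (z n j.castSucc.castSucc)) →
        -- TSRK recursion (ii): on [−r, −c_i h]
        (∀ n, 1 ≤ n → n ≤ N → ∀ i : Fin (s + 1), ∀ ω : Set.Icc (-r) (0 : ℝ),
          ∀ hω : (ω : ℝ) ≤ -(c i * h),
            z n i.castSucc ω = z (n - 1) ((Fin.last s).castSucc)
              ⟨(ω : ℝ) + c i * h, by
                have h0 : 0 < h := by
                  rw [hheq]; exact div_pos (sub_pos.mpr hT) (Nat.cast_pos.mpr hN)
                have hch : 0 ≤ c i * h := mul_nonneg (hc i).1 h0.le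
                exact Set.mem_Icc.mpr ⟨by linarith [ω.2.1], by linarith⟩⟩) →
        -- TSRK recursion (iii): the new constant block
        (∀ n, 1 ≤ n → n ≤ N → ∀ θ : Set.Icc (-r) (0 : ℝ),
          z n (Fin.last (s + 1)) θ =
            z (n - 1) ((Fin.last s).castSucc) ⟨0, Set.right_mem_Icc.mpr (by linarith)⟩) →
        -- local residuals, blocks 1,…,s+1, on [−c_i h, 0]
        (∀ n, 1 ≤ n → n ≤ N → ∀ i : Fin (s + 1), ∀ ω : Set.Icc (-r) (0 : ℝ),
          -(c i * h) ≤ (ω : ℝ) →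
            h • dd n i.castSucc ω =
              Z n i.castSucc ω
                - (1 - u i ((ω : ℝ) / h + c i)) •
                    Z (n - 1) (Fin.last (s + 1)) ⟨0, Set.right_mem_Icc.mpr (by linarith)⟩
                - u i ((ω : ℝ) / h + c i) •
                    Z (n - 1) ((Fin.last s).castSucc) ⟨0, Set.right_mem_Icc.mpr (by linarith)⟩
                - h • ∑ j : Fin s, atil i j ((ω : ℝ) / h + c i) •
                    f (t₀ + ((n : ℝ) - 2 + c j.castSucc) * h) (Z (n - 1) j.castSucc.castSucc)
                - h • ∑ j : Fin s, a i j ((ω : ℝ) / h + c i) •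
                    f (t₀ + ((n : ℝ) - 1 + c j.castSucc) * h) (Z n j.castSucc.castSucc)) →
        -- local residuals vanish on [−r, −c_i h) and in the (s+2)-th block
        (∀ n, 1 ≤ n → n ≤ N → ∀ i : Fin (s + 1), ∀ ω : Set.Icc (-r) (0 : ℝ),
          (ω : ℝ) < -(c i * h) → dd n i.castSucc ω = 0) →
        (∀ n, 1 ≤ n → n ≤ N → ∀ θ : Set.Icc (-r) (0 : ℝ), dd n (Fin.last (s + 1)) θ = 0) →
        -- starting error of uniform order p
        (∀ i, ‖Z 0 i - z 0 i‖ ≤ C₁ * h ^ p) →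
        -- uniform order of consistency p − 1
        (∀ n, 1 ≤ n → n ≤ N → ∀ i, ‖dd n i‖ ≤ C₁ * h ^ (p - 1)) →
        -- discrete order of consistency p
        (∀ n, 1 ≤ n → n ≤ N - 1 → ∀ i,
          ‖dd n i ⟨0, Set.right_mem_Icc.mpr (by linarith)⟩‖ ≤ C₁ * h ^ p) →
        -- conclusion: uniform order of convergence p
        ∀ n ≤ N, ∀ i, ‖Z n i - z n i‖ ≤ C * h ^ p := by

  classical
  obtain ⟨Bu, hBu0, hBu⟩ := tsrk_poly_bound u hupoly
  obtain ⟨Bt, hBt0, hBt⟩ := tsrk_poly_bound (fun q : Fin (s+1) × Fin s => atil q.1 q.2)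
    (fun q => hatilpoly q.1 q.2)
  obtain ⟨Bb, hBb0, hBb⟩ := tsrk_poly_bound (fun q : Fin (s+1) × Fin s => a q.1 q.2)
    (fun q => hapoly q.1 q.2)
  set L' : ℝ := max L 0 with hL'def
  have hL'0 : 0 ≤ L' := le_max_right _ _
  set Ba : ℝ := max Bt Bb with hBadef
  have hBa0 : 0 ≤ Ba := le_trans hBt0 (le_max_left _ _)
  set CL : ℝ := s * Ba * L' with hCLdef
  have hCL0 : 0 ≤ CL := by positivity
  set Ku : ℝ := 1 + 2 * Bu with hKudef
  have hKu1 : 1 ≤ Ku := by rw [hKudef]; linarith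
  have hKu0 : 0 ≤ Ku := by linarith
  have hCM0 : 0 ≤ CM := by linarith
  set Γ : ℝ := 2*Ku*CM*C₁*(T - t₀ + 2) + 2*C₁ with hΓdef
  have hΓ0 : 0 < Γ := by
    rw [hΓdef]
    have h9 : (0:ℝ) ≤ 2*Ku*CM*C₁*(T - t₀ + 2) := by
      have := sub_pos.mpr hT
      have h8 : (0:ℝ) ≤ 2*Ku := by linarith
      nlinarith [mul_nonneg (mul_nonneg (mul_nonneg h8 hCM0) hC₁.le)
        (by linarith : (0:ℝ) ≤ T - t₀ + 2)]
    linarith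
  set Bc : ℝ := 4*Ku*CM*CL + 2*CL with hBcdef
  have hBc0 : 0 ≤ Bc := by
    rw [hBcdef]
    nlinarith [mul_nonneg (mul_nonneg (by linarith : (0:ℝ) ≤ 4*Ku) hCM0) hCL0]
  refine ⟨min 1 (1/(2*(CL+1))), ⟨lt_min one_pos (by positivity), min_le_left _ _⟩,
    Γ * Real.exp (Bc * (T - t₀)), by positivity, ?_⟩
  intro N hN h hheq hhbar Z z dd hZc hZl hzc hrec1 hrec2 hrec3 hres hdd0 hddl hq0 hdU hdD
  have h0 : 0 < h := by
    rw [hheq]; exact div_pos (sub_pos.mpr hT) (Nat.cast_pos.mpr hN)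
  have h1 : h ≤ 1 := le_trans hhbar (min_le_left _ _)
  have hhCL : h * CL ≤ 1/2 := by
    have h2 : h ≤ 1/(2*(CL+1)) := le_trans hhbar (min_le_right _ _)
    have h3 : h * (CL+1) ≤ (1/(2*(CL+1))) * (CL+1) :=
      mul_le_mul_of_nonneg_right h2 (by positivity)
    have h4 : (1/(2*(CL+1))) * (CL+1) = 1/2 := by field_simp
    nlinarith
  have hNh : (N:ℝ) * h = T - t₀ := by
    rw [hheq]; field_simp
  have hmem0 : (0:ℝ) ∈ Set.Icc (-r) (0:ℝ) := Set.right_mem_Icc.mpr (by linarith)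
  set θ0 : Set.Icc (-r) (0:ℝ) := ⟨0, hmem0⟩ with hθ0def
  have hθ0coe : (θ0 : ℝ) = 0 := rfl
  set E : ℕ → ℝ := fun n => Finset.univ.sup' Finset.univ_nonempty
    (fun i : Fin (s+2) => ‖Z n i - z n i‖) with hEdef
  have hElb : ∀ n i, ‖Z n i - z n i‖ ≤ E n := fun n i => by
    simp only [hEdef]
    exact Finset.le_sup' (fun i : Fin (s+2) => ‖Z n i - z n i‖) (Finset.mem_univ i)
  have hE0 : ∀ n, 0 ≤ E n := fun n =>
    le_trans (norm_nonneg (Z n (Fin.last (s+1)) - z n (Fin.last (s+1)))) (hElb n (Fin.last (s+1)))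
  have hEub : ∀ n (b : ℝ), (∀ i, ‖Z n i - z n i‖ ≤ b) → E n ≤ b := fun n b hb => by
    simp only [hEdef]
    exact Finset.sup'_le _ _ fun i _ => hb i
  set X : ℕ → Fin (s+2) → EuclideanSpace ℝ (Fin d) := fun n i => (Z n i - z n i) θ0 with hXdef
  have hXapp : ∀ n i, X n i = Z n i θ0 - z n i θ0 := fun n i => by
    simp only [hXdef, ContinuousMap.sub_apply]
  have hXE : ∀ n, ‖X n‖ ≤ E n := fun n => by
    apply (pi_norm_le_iff_of_nonneg (hE0 n)).mpr
    intro i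
    rw [hXapp, ← ContinuousMap.sub_apply]
    exact le_trans (ContinuousMap.norm_coe_le_norm _ _) (hElb n i)
  have hE0start : E 0 ≤ C₁ * h ^ p := hEub 0 _ hq0
  set DD : ℕ → ℝ := fun m => if m = N then C₁*h^(p-1) else C₁*h^p with hDDdef
  have hDD0 : ∀ m, 0 ≤ DD m := by
    intro m; rw [hDDdef]; dsimp only; split <;> positivity
  have hpow : h * h^(p-1) = h^p := by
    conv_rhs => rw [show p = (p-1)+1 by omega]
    rw [pow_succ]; ring
  -- value of exact solution blocks
  have hZS : ∀ m, m ≤ N → ∀ θ : Set.Icc (-r) (0:ℝ),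
      Z m ((Fin.last s).castSucc) θ = y (t₀ + (m:ℝ)*h + (θ:ℝ)) := by
    intro m hm θ
    rw [hZc m hm (Fin.last s) θ, hcl]
    ring_nf
  -- dd at 0 bound
  have hdd0b : ∀ m, 1 ≤ m → m ≤ N → ∀ i : Fin (s+2), ‖dd m i θ0‖ ≤ DD m := by
    intro m h1m hmN i
    by_cases hmN' : m = N
    · rw [hDDdef]; dsimp only; rw [if_pos hmN']
      exact le_trans (ContinuousMap.norm_coe_le_norm _ _) (hdU m h1m hmN i)
    · rw [hDDdef]; dsimp only; rw [if_neg hmN']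
      exact hdD m h1m (by omega) i
  -- matrix rows
  have hMrow1 : ∀ (i : Fin (s+1)) (v : Fin (s+2) → EuclideanSpace ℝ (Fin d)),
      ∑ j, M i.castSucc j • v j
        = u i (c i) • v ((Fin.last s).castSucc) + (1 - u i (c i)) • v (Fin.last (s+1)) := by
    intro i v
    have hiv : ((i.castSucc : Fin (s+2)) : ℕ) < s + 1 := by
      simpa using i.isLt
    have hieq : (⟨((i.castSucc : Fin (s+2)) : ℕ), hiv⟩ : Fin (s+1)) = i := by
      ext; simp
    have hjS : (((Fin.last s).castSucc : Fin (s+2)) : ℕ) = s := by simp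
    have hjL : ((Fin.last (s+1) : Fin (s+2)) : ℕ) = s + 1 := by simp
    have hMa : ∀ j : Fin s, M i.castSucc j.castSucc.castSucc = 0 := by
      intro j
      have hjv : ((j.castSucc.castSucc : Fin (s+2)) : ℕ) = (j : ℕ) := by simp
      rw [hM, dif_pos hiv, if_neg (by rw [hjv]; omega), if_neg (by rw [hjv]; omega)]
    have hMb : M i.castSucc ((Fin.last s).castSucc) = u i (c i) := by
      rw [hM, dif_pos hiv, if_pos hjS, hieq]
    have hMc : M i.castSucc (Fin.last (s+1)) = 1 - u i (c i) := by
      rw [hM, dif_pos hiv, if_neg (by rw [hjL]; omega), if_pos hjL, hieq]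
    rw [Fin.sum_univ_castSucc (f := fun j : Fin (s+2) => M i.castSucc j • v j)]
    rw [Fin.sum_univ_castSucc (f := fun j : Fin (s+1) => M i.castSucc j.castSucc • v j.castSucc)]
    rw [hMb, hMc]
    rw [Finset.sum_eq_zero (fun j _ => by rw [hMa j, zero_smul])]
    abel
  have hMrow2 : ∀ (v : Fin (s+2) → EuclideanSpace ℝ (Fin d)),
      ∑ j, M (Fin.last (s+1)) j • v j = v ((Fin.last s).castSucc) := by
    intro v
    have hiv : ¬ ((Fin.last (s+1) : Fin (s+2)) : ℕ) < s + 1 := by simp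
    have hjS : (((Fin.last s).castSucc : Fin (s+2)) : ℕ) = s := by simp
    have hMa : ∀ j : Fin s, M (Fin.last (s+1)) j.castSucc.castSucc = 0 := by
      intro j
      have hjv : ((j.castSucc.castSucc : Fin (s+2)) : ℕ) = (j : ℕ) := by simp
      rw [hM, dif_neg hiv, if_neg (by rw [hjv]; omega)]
    have hMb : M (Fin.last (s+1)) ((Fin.last s).castSucc) = 1 := by
      rw [hM, dif_neg hiv, if_pos hjS]
    have hMc : M (Fin.last (s+1)) (Fin.last (s+1)) = 0 := by
      rw [hM, dif_neg hiv, if_neg (by simp)]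
    rw [Fin.sum_univ_castSucc (f := fun j : Fin (s+2) => M (Fin.last (s+1)) j • v j)]
    rw [Fin.sum_univ_castSucc
      (f := fun j : Fin (s+1) => M (Fin.last (s+1)) j.castSucc • v j.castSucc)]
    rw [hMb, hMc, one_smul, zero_smul]
    rw [Finset.sum_eq_zero (fun j _ => by rw [hMa j, zero_smul])]
    abel
  -- key error identity on region (i)
  have hkey : ∀ n, 1 ≤ n → n ≤ N → ∀ (i : Fin (s+1)) (ω : Set.Icc (-r) (0:ℝ)),
      -(c i * h) ≤ (ω:ℝ) →
      (Z n i.castSucc - z n i.castSucc) ω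
        = (1 - u i ((ω:ℝ)/h + c i)) • X (n-1) (Fin.last (s+1))
        + u i ((ω:ℝ)/h + c i) • X (n-1) ((Fin.last s).castSucc)
        + h • ∑ j : Fin s, atil i j ((ω:ℝ)/h + c i) •
            (f (t₀ + ((n:ℝ) - 2 + c j.castSucc) * h) (Z (n-1) j.castSucc.castSucc)
             - f (t₀ + ((n:ℝ) - 2 + c j.castSucc) * h) (z (n-1) j.castSucc.castSucc))
        + h • ∑ j : Fin s, a i j ((ω:ℝ)/h + c i) •
            (f (t₀ + ((n:ℝ) - 1 + c j.castSucc) * h) (Z n j.castSucc.castSucc)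
             - f (t₀ + ((n:ℝ) - 1 + c j.castSucc) * h) (z n j.castSucc.castSucc))
        + h • dd n i.castSucc ω := by
    intro n hn1 hnN i ω hω
    have hres' := hres n hn1 hnN i ω hω
    have hrec' := hrec1 n hn1 hnN i ω hω
    rw [ContinuousMap.sub_apply, hrec']
    simp only [hXapp]
    simp only [smul_sub, Finset.sum_sub_distrib]
    rw [hres']
    abel
  -- bound for the Lipschitz sums
  have hsumb : ∀ (m : ℕ) (coef : Fin s → ℝ) (t' : Fin s → ℝ), (∀ j, |coef j| ≤ Ba) →
      ‖∑ j : Fin s, coef j •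
          (f (t' j) (Z m j.castSucc.castSucc) - f (t' j) (z m j.castSucc.castSucc))‖
        ≤ CL * E m := by
    intro m coef t' hcoef
    have hterm : ∀ j : Fin s,
        ‖coef j • (f (t' j) (Z m j.castSucc.castSucc) - f (t' j) (z m j.castSucc.castSucc))‖
          ≤ Ba * (L' * E m) := by
      intro j
      rw [norm_smul, Real.norm_eq_abs]
      have hf1 : ‖f (t' j) (Z m j.castSucc.castSucc) - f (t' j) (z m j.castSucc.castSucc)‖
          ≤ L' * E m := by
        calc ‖f (t' j) (Z m j.castSucc.castSucc) - f (t' j) (z m j.castSucc.castSucc)‖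
            ≤ L * ‖Z m j.castSucc.castSucc - z m j.castSucc.castSucc‖ := hf_lip _ _ _
          _ ≤ L' * ‖Z m j.castSucc.castSucc - z m j.castSucc.castSucc‖ :=
              mul_le_mul_of_nonneg_right (le_max_left _ _) (norm_nonneg _)
          _ ≤ L' * E m := mul_le_mul_of_nonneg_left (hElb m _) hL'0
      exact mul_le_mul (hcoef j) hf1 (norm_nonneg _) hBa0
    calc ‖∑ j : Fin s, coef j •
          (f (t' j) (Z m j.castSucc.castSucc) - f (t' j) (z m j.castSucc.castSucc))‖
        ≤ ∑ j : Fin s, ‖coef j •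
            (f (t' j) (Z m j.castSucc.castSucc) - f (t' j) (z m j.castSucc.castSucc))‖ :=
          norm_sum_le _ _
      _ ≤ ∑ _j : Fin s, Ba * (L' * E m) := Finset.sum_le_sum fun j _ => hterm j
      _ = CL * E m := by
          rw [Finset.sum_const, Finset.card_univ, Fintype.card_fin, nsmul_eq_mul, hCLdef]
          ring
  -- defect of the discrete recursion
  set G : ℕ → Fin (s+2) → EuclideanSpace ℝ (Fin d) :=
    fun m i => X m i - ∑ j, M i j • X (m-1) j with hGdef
  have hGapp : ∀ m i, G m i = X m i - ∑ j, M i j • X (m-1) j := fun m i => by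
    simp only [hGdef]
  have hGb : ∀ m, 1 ≤ m → m ≤ N → ‖G m‖ ≤ h * (CL*(E (m-1) + E m) + DD m) := by
    intro m h1m hmN
    have hb0 : 0 ≤ h * (CL*(E (m-1) + E m) + DD m) := by
      have h5 := hDD0 m
      have h6 := hE0 (m-1)
      have h7 := hE0 m
      have h8 : 0 ≤ CL*(E (m-1) + E m) := mul_nonneg hCL0 (by linarith)
      nlinarith
    apply (pi_norm_le_iff_of_nonneg hb0).mpr
    intro i
    induction i using Fin.lastCases with
    | last =>
        have e1 : Z m (Fin.last (s+1)) θ0 = Z (m-1) ((Fin.last s).castSucc) θ0 := by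
          rw [hZl m hmN θ0, hZS (m-1) (by omega) θ0, hθ0coe]
          congr 1
          push_cast [Nat.cast_sub h1m]
          ring
        have e2 : z m (Fin.last (s+1)) θ0 = z (m-1) ((Fin.last s).castSucc) θ0 :=
          hrec3 m h1m hmN θ0
        have hzero : G m (Fin.last (s+1)) = 0 := by
          rw [hGapp, hMrow2, hXapp, hXapp, e1, e2]
          abel
        rw [hzero, norm_zero]
        exact hb0
    | cast i =>
        rw [hGapp, hMrow1]
        have hmem : -(c i * h) ≤ (θ0:ℝ) := by
          rw [hθ0coe]
          exact neg_nonpos.mpr (mul_nonneg (hc i).1 h0.le)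
        have hk := hkey m h1m hmN i θ0 hmem
        rw [ContinuousMap.sub_apply] at hk
        rw [hθ0coe] at hk
        simp only [zero_div, zero_add] at hk
        rw [hXapp, hk]
        have hsimp :
            (1 - u i (c i)) • X (m-1) (Fin.last (s+1))
            + u i (c i) • X (m-1) ((Fin.last s).castSucc)
            + h • ∑ j : Fin s, atil i j (c i) •
                (f (t₀ + ((m:ℝ) - 2 + c j.castSucc) * h) (Z (m-1) j.castSucc.castSucc)
                 - f (t₀ + ((m:ℝ) - 2 + c j.castSucc) * h) (z (m-1) j.castSucc.castSucc))
            + h • ∑ j : Fin s, a i j (c i) •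
                (f (t₀ + ((m:ℝ) - 1 + c j.castSucc) * h) (Z m j.castSucc.castSucc)
                 - f (t₀ + ((m:ℝ) - 1 + c j.castSucc) * h) (z m j.castSucc.castSucc))
            + h • dd m i.castSucc θ0
            - (u i (c i) • X (m-1) ((Fin.last s).castSucc)
               + (1 - u i (c i)) • X (m-1) (Fin.last (s+1)))
          = h • ∑ j : Fin s, atil i j (c i) •
                (f (t₀ + ((m:ℝ) - 2 + c j.castSucc) * h) (Z (m-1) j.castSucc.castSucc)
                 - f (t₀ + ((m:ℝ) - 2 + c j.castSucc) * h) (z (m-1) j.castSucc.castSucc))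
            + h • ∑ j : Fin s, a i j (c i) •
                (f (t₀ + ((m:ℝ) - 1 + c j.castSucc) * h) (Z m j.castSucc.castSucc)
                 - f (t₀ + ((m:ℝ) - 1 + c j.castSucc) * h) (z m j.castSucc.castSucc))
            + h • dd m i.castSucc θ0 := by abel
        rw [hsimp]
        have hb1 : ‖h • ∑ j : Fin s, atil i j (c i) •
                (f (t₀ + ((m:ℝ) - 2 + c j.castSucc) * h) (Z (m-1) j.castSucc.castSucc)
                 - f (t₀ + ((m:ℝ) - 2 + c j.castSucc) * h) (z (m-1) j.castSucc.castSucc))‖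
            ≤ h * (CL * E (m-1)) := by
          rw [norm_smul, Real.norm_eq_abs, abs_of_pos h0]
          exact mul_le_mul_of_nonneg_left
            (hsumb (m-1) (fun j => atil i j (c i)) _
              (fun j => le_trans (hBt (i, j) (c i) (hc i)) (le_max_left _ _))) h0.le
        have hb2 : ‖h • ∑ j : Fin s, a i j (c i) •
                (f (t₀ + ((m:ℝ) - 1 + c j.castSucc) * h) (Z m j.castSucc.castSucc)
                 - f (t₀ + ((m:ℝ) - 1 + c j.castSucc) * h) (z m j.castSucc.castSucc))‖
            ≤ h * (CL * E m) := by
          rw [norm_smul, Real.norm_eq_abs, abs_of_pos h0]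
          exact mul_le_mul_of_nonneg_left
            (hsumb m (fun j => a i j (c i)) _
              (fun j => le_trans (hBb (i, j) (c i) (hc i)) (le_max_right _ _))) h0.le
        have hb3 : ‖h • dd m i.castSucc θ0‖ ≤ h * DD m := by
          rw [norm_smul, Real.norm_eq_abs, abs_of_pos h0]
          exact mul_le_mul_of_nonneg_left (hdd0b m h1m hmN i.castSucc) h0.le
        calc ‖_ + _ + _‖ ≤ _ := norm_add₃_le
          _ ≤ h * (CL * E (m-1)) + h * (CL * E m) + h * DD m := by
              exact add_le_add (add_le_add hb1 hb2) hb3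
          _ = h * (CL*(E (m-1) + E m) + DD m) := by ring
  -- unrolled recursion and zero-stability bound
  set TM : Module.End ℝ (Fin (s + 2) → EuclideanSpace ℝ (Fin d)) :=
    { toFun := fun x i => ∑ j, M i j • x j
      map_add' := fun x y => by
        funext i
        simp only [Pi.add_apply, smul_add]
        rw [Finset.sum_add_distrib]
      map_smul' := fun t x => by
        funext i
        simp only [Pi.smul_apply, RingHom.id_apply]
        rw [Finset.smul_sum]
        exact Finset.sum_congr rfl fun j _ => smul_comm (M i j) t (x j) } with hTdef
  have hTapp : ∀ (x : Fin (s+2) → EuclideanSpace ℝ (Fin d)) (i : Fin (s+2)),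
      TM x i = ∑ j, M i j • x j := by
    intro x i
    rw [hTdef]
    rfl
  have hTpow : ∀ (l : ℕ) (x : Fin (s+2) → EuclideanSpace ℝ (Fin d)) (i : Fin (s+2)),
      (TM ^ l) x i = ∑ j, (M ^ l) i j • x j := by
    intro l
    induction l with
    | zero =>
        intro x i
        rw [pow_zero, pow_zero, Module.End.one_apply]
        simp [Matrix.one_apply, ite_smul]
    | succ l ih =>
        intro x i
        rw [pow_succ, Module.End.mul_apply, ih (TM x) i]
        calc ∑ j, (M ^ l) i j • TM x j
            = ∑ j, ∑ k, ((M ^ l) i j * M j k) • x k := by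
              refine Finset.sum_congr rfl fun j _ => ?_
              rw [hTapp, Finset.smul_sum]
              exact Finset.sum_congr rfl fun k _ => smul_smul _ _ _
          _ = ∑ k, ∑ j, ((M ^ l) i j * M j k) • x k := Finset.sum_comm
          _ = ∑ k, (∑ j, (M ^ l) i j * M j k) • x k :=
              Finset.sum_congr rfl fun k _ => (Finset.sum_smul).symm
          _ = ∑ k, (M ^ (l+1)) i k • x k :=
              Finset.sum_congr rfl fun k _ => by rw [pow_succ, Matrix.mul_apply]
  have hTle : ∀ (l : ℕ) (x : Fin (s+2) → EuclideanSpace ℝ (Fin d)),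
      ‖(TM ^ l) x‖ ≤ CM * ‖x‖ := by
    intro l x
    rcases Nat.eq_zero_or_pos l with rfl | hl
    · rw [pow_zero, Module.End.one_apply]
      exact le_mul_of_one_le_left (norm_nonneg x) hCM
    · have heq : ⇑(TM ^ l) x = fun i => ∑ j, (M ^ l) i j • x j := funext fun i => hTpow l x i
      rw [heq]
      exact hMpow l hl x
  have hGrec : ∀ m, 1 ≤ m → X m = TM (X (m-1)) + G m := by
    intro m h1m
    funext i
    rw [Pi.add_apply, hTapp, hGapp]
    abel
  have hunroll : ∀ n,
      X n = (TM ^ n) (X 0) + ∑ k ∈ Finset.range n, (TM ^ (n - 1 - k)) (G (k+1)) := by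
    intro n
    induction n with
    | zero => simp [Module.End.one_apply]
    | succ n ih =>
        rw [hGrec (n+1) (by omega)]
        simp only [Nat.add_sub_cancel]
        rw [ih, map_add, map_sum, Finset.sum_range_succ]
        simp only [Nat.sub_self, pow_zero, Module.End.one_apply]
        have e1 : TM ((TM ^ n) (X 0)) = (TM ^ (n+1)) (X 0) := by
          rw [pow_succ', Module.End.mul_apply]
        have e2 : ∀ k ∈ Finset.range n,
            TM ((TM ^ (n - 1 - k)) (G (k+1))) = (TM ^ (n - k)) (G (k+1)) := by
          intro k hk
          have hk' : k < n := Finset.mem_range.mp hk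
          rw [show n - k = (n - 1 - k) + 1 by omega, pow_succ', Module.End.mul_apply]
        rw [e1, Finset.sum_congr rfl e2]
        abel
  have hXnorm : ∀ n, ‖X n‖ ≤ CM * ‖X 0‖ + CM * ∑ k ∈ Finset.range n, ‖G (k+1)‖ := by
    intro n
    rw [hunroll n]
    calc ‖(TM ^ n) (X 0) + ∑ k ∈ Finset.range n, (TM ^ (n - 1 - k)) (G (k+1))‖
        ≤ ‖(TM ^ n) (X 0)‖ + ‖∑ k ∈ Finset.range n, (TM ^ (n - 1 - k)) (G (k+1))‖ :=
          norm_add_le _ _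
      _ ≤ CM * ‖X 0‖ + ∑ k ∈ Finset.range n, ‖(TM ^ (n - 1 - k)) (G (k+1))‖ :=
          add_le_add (hTle n (X 0)) (norm_sum_le _ _)
      _ ≤ CM * ‖X 0‖ + ∑ k ∈ Finset.range n, CM * ‖G (k+1)‖ :=
          add_le_add le_rfl (Finset.sum_le_sum fun k _ => hTle _ _)
      _ = CM * ‖X 0‖ + CM * ∑ k ∈ Finset.range n, ‖G (k+1)‖ := by rw [Finset.mul_sum]
  -- full discrete bound
  have hXfull : ∀ m, m ≤ N →
      ‖X m‖ ≤ CM*C₁*(T - t₀ + 2)*h^p + 2*CM*CL*h*∑ k ∈ Finset.range (m+1), E k := by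
    intro m hm
    have hX0b : ‖X 0‖ ≤ C₁ * h ^ p := le_trans (hXE 0) hE0start
    have hsumE : ∑ k ∈ Finset.range m, (E k + E (k+1))
        ≤ 2 * ∑ k ∈ Finset.range (m+1), E k := by
      have h1' : ∑ k ∈ Finset.range m, E k ≤ ∑ k ∈ Finset.range (m+1), E k :=
        Finset.sum_le_sum_of_subset_of_nonneg
          (Finset.range_subset_range.mpr (Nat.le_succ m)) (fun k _ _ => hE0 k)
      have h2' : ∑ k ∈ Finset.range m, E (k+1) ≤ ∑ k ∈ Finset.range (m+1), E k := by
        rw [Finset.sum_range_succ' E m]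
        linarith [hE0 0]
      rw [Finset.sum_add_distrib]
      linarith
    have hGter : ∀ k ∈ Finset.range m, ‖G (k+1)‖
        ≤ (h*(CL*(E k + E (k+1))) + h*(C₁*h^p)) + (if k = N-1 then C₁*h^p else 0) := by
      intro k hk
      have hk2 : k + 1 ≤ N := by have := Finset.mem_range.mp hk; omega
      have hGk := hGb (k+1) (by omega) hk2
      simp only [Nat.add_sub_cancel] at hGk
      have hDDb : h * DD (k+1) ≤ h*(C₁*h^p) + (if k = N-1 then C₁*h^p else 0) := by
        by_cases hkN : k + 1 = N
        · rw [hDDdef]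
          simp only
          rw [if_pos hkN, if_pos (by omega : k = N-1)]
          have he : h * (C₁ * h^(p-1)) = C₁ * h^p := by rw [← hpow]; ring
          have h9 : 0 ≤ h*(C₁*h^p) := by positivity
          linarith
        · rw [hDDdef]
          simp only
          rw [if_neg hkN, if_neg (by omega : ¬ k = N-1)]
          simp
      calc ‖G (k+1)‖ ≤ h * (CL*(E k + E (k+1)) + DD (k+1)) := hGk
        _ = h*(CL*(E k + E (k+1))) + h * DD (k+1) := by ring
        _ ≤ (h*(CL*(E k + E (k+1))) + h*(C₁*h^p)) + (if k = N-1 then C₁*h^p else 0) := by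
            linarith
    have hGsum : ∑ k ∈ Finset.range m, ‖G (k+1)‖
        ≤ 2*CL*h*(∑ k ∈ Finset.range (m+1), E k) + (T - t₀ + 1)*(C₁*h^p) := by
      calc ∑ k ∈ Finset.range m, ‖G (k+1)‖
          ≤ ∑ k ∈ Finset.range m,
              ((h*(CL*(E k + E (k+1))) + h*(C₁*h^p)) + (if k = N-1 then C₁*h^p else 0)) :=
            Finset.sum_le_sum hGter
        _ = h*CL*(∑ k ∈ Finset.range m, (E k + E (k+1))) + (m:ℝ)*(h*(C₁*h^p))
            + ∑ k ∈ Finset.range m, (if k = N-1 then C₁*h^p else 0) := by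
            rw [Finset.sum_add_distrib, Finset.sum_add_distrib, Finset.sum_const,
              Finset.card_range, nsmul_eq_mul, Finset.mul_sum]
            congr 1
            congr 1
            exact Finset.sum_congr rfl fun k _ => by ring
        _ ≤ h*CL*(2 * ∑ k ∈ Finset.range (m+1), E k) + (T - t₀)*(C₁*h^p) + C₁*h^p := by
            have hb1 : h*CL*(∑ k ∈ Finset.range m, (E k + E (k+1)))
                ≤ h*CL*(2 * ∑ k ∈ Finset.range (m+1), E k) :=
              mul_le_mul_of_nonneg_left hsumE (by positivity)
            have hb2 : (m:ℝ)*(h*(C₁*h^p)) ≤ (T - t₀)*(C₁*h^p) := by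
              have hmh : (m:ℝ)*h ≤ T - t₀ := by
                rw [← hNh]
                have : (m:ℝ) ≤ (N:ℝ) := Nat.cast_le.mpr hm
                nlinarith
              have h9 : (0:ℝ) ≤ C₁*h^p := by positivity
              calc (m:ℝ)*(h*(C₁*h^p)) = ((m:ℝ)*h)*(C₁*h^p) := by ring
                _ ≤ (T - t₀)*(C₁*h^p) := mul_le_mul_of_nonneg_right hmh h9
            have hb3 : ∑ k ∈ Finset.range m, (if k = N-1 then C₁*h^p else 0) ≤ C₁*h^p := by
              rw [Finset.sum_ite_eq' (Finset.range m) (N-1) (fun _ => C₁*h^p)]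
              split
              · exact le_refl _
              · positivity
            linarith
        _ = 2*CL*h*(∑ k ∈ Finset.range (m+1), E k) + (T - t₀ + 1)*(C₁*h^p) := by ring
    calc ‖X m‖ ≤ CM * ‖X 0‖ + CM * ∑ k ∈ Finset.range m, ‖G (k+1)‖ := hXnorm m
      _ ≤ CM * (C₁ * h^p)
          + CM * (2*CL*h*(∑ k ∈ Finset.range (m+1), E k) + (T - t₀ + 1)*(C₁*h^p)) :=
          add_le_add (mul_le_mul_of_nonneg_left hX0b hCM0)
            (mul_le_mul_of_nonneg_left hGsum hCM0)
      _ = CM*C₁*(T - t₀ + 2)*h^p + 2*CM*CL*h*∑ k ∈ Finset.range (m+1), E k := by ring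
  -- one-step uniform bound
  have hEstep : ∀ n, 1 ≤ n → n ≤ N →
      E n ≤ max (E (n-1)) (Ku * ‖X (n-1)‖ + h*CL*(E (n-1) + E n) + C₁ * h^p) := by
    intro n h1n hnN
    have hR2' : 0 ≤ h*CL*(E (n-1) + E n) :=
      mul_nonneg (mul_nonneg h0.le hCL0) (add_nonneg (hE0 (n-1)) (hE0 n))
    have hXn0 : 0 ≤ ‖X (n-1)‖ := norm_nonneg _
    have hhp0 : 0 < C₁ * h^p := by positivity
    have hR1 : E (n-1) ≤ max (E (n-1)) (Ku * ‖X (n-1)‖ + h*CL*(E (n-1) + E n) + C₁ * h^p) :=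
      le_max_left _ _
    have hR2 : Ku * ‖X (n-1)‖ + h*CL*(E (n-1) + E n) + C₁ * h^p
        ≤ max (E (n-1)) (Ku * ‖X (n-1)‖ + h*CL*(E (n-1) + E n) + C₁ * h^p) :=
      le_max_right _ _
    have hR0 : 0 ≤ max (E (n-1)) (Ku * ‖X (n-1)‖ + h*CL*(E (n-1) + E n) + C₁ * h^p) :=
      le_trans (hE0 (n-1)) hR1
    apply hEub
    intro i
    rw [ContinuousMap.norm_le _ hR0]
    intro ω
    rw [ContinuousMap.sub_apply]
    induction i using Fin.lastCases with
    | last =>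
        have e1 : Z n (Fin.last (s+1)) ω = Z (n-1) ((Fin.last s).castSucc) θ0 := by
          rw [hZl n hnN ω, hZS (n-1) (by omega) θ0, hθ0coe]
          congr 1
          push_cast [Nat.cast_sub h1n]
          ring
        have e2 : z n (Fin.last (s+1)) ω = z (n-1) ((Fin.last s).castSucc) θ0 :=
          hrec3 n h1n hnN ω
        rw [e1, e2]
        calc ‖Z (n-1) ((Fin.last s).castSucc) θ0 - z (n-1) ((Fin.last s).castSucc) θ0‖
            = ‖X (n-1) ((Fin.last s).castSucc)‖ := by rw [hXapp]
          _ ≤ ‖X (n-1)‖ := norm_le_pi_norm _ _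
          _ ≤ Ku * ‖X (n-1)‖ + h*CL*(E (n-1) + E n) + C₁ * h^p := by nlinarith
          _ ≤ _ := hR2
    | cast i =>
        rcases le_or_gt (-(c i * h)) (ω : ℝ) with hreg | hreg
        · have hk := hkey n h1n hnN i ω hreg
          rw [ContinuousMap.sub_apply] at hk
          rw [hk]
          have hv : (ω:ℝ)/h + c i ∈ Set.Icc (0:ℝ) 1 := by
            constructor
            · have h4 : -(c i) ≤ (ω:ℝ)/h := by
                rw [le_div_iff₀ h0]
                nlinarith
              linarith
            · have h4 : (ω:ℝ)/h ≤ 0 := div_nonpos_of_nonpos_of_nonneg ω.2.2 h0.le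
              have h5 := (hc i).2
              linarith
          have hu1 : |u i ((ω:ℝ)/h + c i)| ≤ Bu := hBu i _ hv
          have hu2 : |1 - u i ((ω:ℝ)/h + c i)| ≤ 1 + Bu := by
            calc |1 - u i ((ω:ℝ)/h + c i)| ≤ |(1:ℝ)| + |u i ((ω:ℝ)/h + c i)| := abs_sub _ _
              _ ≤ 1 + Bu := by rw [abs_one]; linarith
          have hb1 : ‖(1 - u i ((ω:ℝ)/h + c i)) • X (n-1) (Fin.last (s+1))‖
              ≤ (1 + Bu) * ‖X (n-1)‖ := by
            rw [norm_smul, Real.norm_eq_abs]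
            exact mul_le_mul hu2 (norm_le_pi_norm _ _) (norm_nonneg _) (by linarith)
          have hb2 : ‖u i ((ω:ℝ)/h + c i) • X (n-1) ((Fin.last s).castSucc)‖
              ≤ Bu * ‖X (n-1)‖ := by
            rw [norm_smul, Real.norm_eq_abs]
            exact mul_le_mul hu1 (norm_le_pi_norm _ _) (norm_nonneg _) hBu0
          have hb3 : ‖h • ∑ j : Fin s, atil i j ((ω:ℝ)/h + c i) •
                (f (t₀ + ((n:ℝ) - 2 + c j.castSucc) * h) (Z (n-1) j.castSucc.castSucc)
                 - f (t₀ + ((n:ℝ) - 2 + c j.castSucc) * h) (z (n-1) j.castSucc.castSucc))‖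
              ≤ h * (CL * E (n-1)) := by
            rw [norm_smul, Real.norm_eq_abs, abs_of_pos h0]
            exact mul_le_mul_of_nonneg_left
              (hsumb (n-1) (fun j => atil i j ((ω:ℝ)/h + c i)) _
                (fun j => le_trans (hBt (i, j) _ hv) (le_max_left _ _))) h0.le
          have hb4 : ‖h • ∑ j : Fin s, a i j ((ω:ℝ)/h + c i) •
                (f (t₀ + ((n:ℝ) - 1 + c j.castSucc) * h) (Z n j.castSucc.castSucc)
                 - f (t₀ + ((n:ℝ) - 1 + c j.castSucc) * h) (z n j.castSucc.castSucc))‖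
              ≤ h * (CL * E n) := by
            rw [norm_smul, Real.norm_eq_abs, abs_of_pos h0]
            exact mul_le_mul_of_nonneg_left
              (hsumb n (fun j => a i j ((ω:ℝ)/h + c i)) _
                (fun j => le_trans (hBb (i, j) _ hv) (le_max_right _ _))) h0.le
          have hb5 : ‖h • dd n i.castSucc ω‖ ≤ C₁ * h^p := by
            rw [norm_smul, Real.norm_eq_abs, abs_of_pos h0]
            calc h * ‖dd n i.castSucc ω‖
                ≤ h * ‖dd n i.castSucc‖ :=
                  mul_le_mul_of_nonneg_left (ContinuousMap.norm_coe_le_norm _ _) h0.le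
              _ ≤ h * (C₁ * h^(p-1)) :=
                  mul_le_mul_of_nonneg_left (hdU n h1n hnN i.castSucc) h0.le
              _ = C₁ * h^p := by rw [← hpow]; ring
          have htri : ∀ v1 v2 v3 v4 v5 : EuclideanSpace ℝ (Fin d),
              ‖v1 + v2 + v3 + v4 + v5‖ ≤ ‖v1‖ + ‖v2‖ + ‖v3‖ + ‖v4‖ + ‖v5‖ := by
            intro v1 v2 v3 v4 v5
            calc ‖v1 + v2 + v3 + v4 + v5‖ ≤ ‖v1 + v2 + v3 + v4‖ + ‖v5‖ := norm_add_le _ _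
              _ ≤ (‖v1 + v2 + v3‖ + ‖v4‖) + ‖v5‖ := by
                  linarith [norm_add_le (v1 + v2 + v3) v4]
              _ ≤ ((‖v1 + v2‖ + ‖v3‖) + ‖v4‖) + ‖v5‖ := by
                  linarith [norm_add_le (v1 + v2) v3]
              _ ≤ _ := by linarith [norm_add_le v1 v2]
          refine le_trans (le_trans (htri _ _ _ _ _) ?_) hR2
          have hKu : (1 + Bu) * ‖X (n-1)‖ + Bu * ‖X (n-1)‖ = Ku * ‖X (n-1)‖ := by
            rw [hKudef]; ring
          have hsplit : h * (CL * E (n-1)) + h * (CL * E n) = h*CL*(E (n-1) + E n) := by ring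
          linarith
        · have h2 := hrec2 n h1n hnN i ω (le_of_lt hreg)
          have hmempt : ((ω:ℝ) + c i * h) ∈ Set.Icc (-r) (0:ℝ) := by
            constructor
            · have := ω.2.1
              have := mul_nonneg (hc i).1 h0.le
              linarith
            · linarith
          have e1 : Z n i.castSucc ω
              = Z (n-1) ((Fin.last s).castSucc) ⟨(ω:ℝ) + c i * h, hmempt⟩ := by
            rw [hZc n hnN i ω, hZS (n-1) (by omega) ⟨(ω:ℝ) + c i * h, hmempt⟩]
            refine congrArg y ?_
            show t₀ + (n:ℝ)*h + (c i - 1)*h + (ω:ℝ)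
              = t₀ + ((n-1 : ℕ):ℝ)*h + ((ω:ℝ) + c i * h)
            push_cast [Nat.cast_sub h1n]
            ring
          have e2 : z n i.castSucc ω
              = z (n-1) ((Fin.last s).castSucc) ⟨(ω:ℝ) + c i * h, hmempt⟩ := h2
          rw [e1, e2]
          calc ‖Z (n-1) ((Fin.last s).castSucc) ⟨(ω:ℝ) + c i * h, hmempt⟩
                - z (n-1) ((Fin.last s).castSucc) ⟨(ω:ℝ) + c i * h, hmempt⟩‖
              = ‖(Z (n-1) ((Fin.last s).castSucc) - z (n-1) ((Fin.last s).castSucc))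
                  ⟨(ω:ℝ) + c i * h, hmempt⟩‖ := by rw [ContinuousMap.sub_apply]
            _ ≤ ‖Z (n-1) ((Fin.last s).castSucc) - z (n-1) ((Fin.last s).castSucc)‖ :=
                ContinuousMap.norm_coe_le_norm _ _
            _ ≤ E (n-1) := hElb _ _
            _ ≤ _ := hR1
  have hE2 : ∀ n, 1 ≤ n → n ≤ N →
      E n ≤ max (E (n-1)) (2*Ku*‖X (n-1)‖ + 2*h*CL*E (n-1) + 2*C₁*h^p) := by
    intro n h1n hnN
    rcases le_max_iff.mp (hEstep n h1n hnN) with hcase | hcase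
    · exact le_max_of_le_left hcase
    · apply le_max_of_le_right
      have hX0 : 0 ≤ ‖X (n-1)‖ := norm_nonneg _
      have h5 : h * CL * E n ≤ (1/2) * E n := by
        have := mul_le_mul_of_nonneg_right hhCL (hE0 n)
        nlinarith
      nlinarith [hE0 (n-1), mul_nonneg (mul_nonneg h0.le hCL0) (hE0 (n-1))]
  -- linear recursion for E
  have hEfin : ∀ n, n ≤ N → E n ≤ Γ*h^p + Bc*h*∑ k ∈ Finset.range n, E k := by
    intro n
    induction n with
    | zero =>
        intro _
        simp only [Finset.range_zero, Finset.sum_empty, mul_zero]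
        have hC₁Γ : C₁ * h^p ≤ Γ * h^p := by
          apply mul_le_mul_of_nonneg_right _ (by positivity)
          rw [hΓdef]
          nlinarith [mul_nonneg (mul_nonneg (mul_nonneg
            (by linarith : (0:ℝ) ≤ 2*Ku) hCM0) hC₁.le)
            (by nlinarith [sub_pos.mpr hT] : (0:ℝ) ≤ T - t₀ + 2)]
        linarith [hE0start]
    | succ n ih =>
        intro hn1
        have hnN : n ≤ N := by omega
        have ihn := ih hnN
        have h2 := hE2 (n+1) (by omega) hn1
        simp only [Nat.add_sub_cancel] at h2
        have hS0 : 0 ≤ ∑ k ∈ Finset.range (n+1), E k :=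
          Finset.sum_nonneg fun k _ => hE0 k
        have hSsub : ∑ k ∈ Finset.range n, E k ≤ ∑ k ∈ Finset.range (n+1), E k := by
          rw [Finset.sum_range_succ]
          linarith [hE0 n]
        have hEnS : E n ≤ ∑ k ∈ Finset.range (n+1), E k := by
          rw [Finset.sum_range_succ]
          linarith [Finset.sum_nonneg (fun k (_ : k ∈ Finset.range n) => hE0 k)]
        rcases le_max_iff.mp h2 with hcase | hcase
        · calc E (n+1) ≤ Γ*h^p + Bc*h*∑ k ∈ Finset.range n, E k := le_trans hcase ihn
            _ ≤ Γ*h^p + Bc*h*∑ k ∈ Finset.range (n+1), E k := by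
                have hBch : 0 ≤ Bc*h := mul_nonneg hBc0 h0.le
                nlinarith
        · have hXb := hXfull n hnN
          have c1 : 2*Ku*‖X n‖
              ≤ 2*Ku*(CM*C₁*(T - t₀ + 2)*h^p + 2*CM*CL*h*∑ k ∈ Finset.range (n+1), E k) :=
            mul_le_mul_of_nonneg_left hXb (by linarith)
          have c2 : 2*h*CL*E n ≤ 2*CL*h*∑ k ∈ Finset.range (n+1), E k := by
            have h9 : 0 ≤ 2*CL*h := by positivity
            nlinarith [mul_le_mul_of_nonneg_left hEnS h9]
          have hkey2 : 2*Ku*(CM*C₁*(T - t₀ + 2)*h^p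
                + 2*CM*CL*h*∑ k ∈ Finset.range (n+1), E k)
                + 2*CL*h*∑ k ∈ Finset.range (n+1), E k + 2*C₁*h^p
              = Γ*h^p + Bc*h*∑ k ∈ Finset.range (n+1), E k := by
            rw [hΓdef, hBcdef]
            ring
          linarith
  -- Gronwall
  have hgron := tsrk_gronwall (Γ*h^p) (Bc*h) (by positivity) E N
    (fun n hn => hEfin n hn)
  intro n hn i
  have hfinal : E n ≤ Γ*h^p * (1 + Bc*h)^n := hgron n hn
  have hexp : (1 + Bc*h)^n ≤ Real.exp (Bc * (T - t₀)) := by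
    have h6 : (1 + Bc*h) ≤ Real.exp (Bc*h) := by
      have := Real.add_one_le_exp (Bc*h); linarith
    calc (1 + Bc*h)^n ≤ (Real.exp (Bc*h))^n := by
          apply pow_le_pow_left₀ (by positivity) h6
      _ = Real.exp ((n:ℝ) * (Bc*h)) := (Real.exp_nat_mul _ n).symm
      _ ≤ Real.exp (Bc * (T - t₀)) := by
          apply Real.exp_le_exp.mpr
          have h7 : (n:ℝ) * h ≤ T - t₀ := by
            rw [← hNh]
            have : (n:ℝ) ≤ N := Nat.cast_le.mpr hn
            nlinarith
          nlinarith
  calc ‖Z n i - z n i‖ ≤ E n := hElb n i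
    _ ≤ Γ*h^p * (1 + Bc*h)^n := hfinal
    _ ≤ Γ*h^p * Real.exp (Bc * (T - t₀)) := by
        apply mul_le_mul_of_nonneg_left hexp (by positivity)
    _ = Γ * Real.exp (Bc * (T - t₀)) * h^p := by ring
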